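/- In a K3 category D (a ℂ-linear triangulated category of finite type whose Serre functor is the double shift [2]), consider an exact triangle A → E → B → A[1] with Ext^r(A, B) = 0 for all r ≤ 0 and Ext^s(B, B) = 0 for all s < 0. Then dim Ext^1(A, A) + dim Ext^1(B, B) ≤ dim Ext^1(E, E). -/

import Mathlib

/-!
Mukai's lemma in a K3 category `D`: a ℂ-linear triangulated category of finite type whose
Serre functor is the double shift, the latter encoded by the hypothesis `serre` stating that
`Ext^i(A,B) ≅ Ext^{2-i}(B,A)^*` (equality of dimensions), where `Ext^i(A,B) := Hom(A, B⟦i⟧)`.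
Given an exact triangle `A ⟶ E ⟶ B ⟶ A⟦1⟧` with `Ext^r(A,B) = 0` for `r ≤ 0` and
`Ext^s(B,B) = 0` for `s < 0`, one has `ext¹(A,A) + ext¹(B,B) ≤ ext¹(E,E)`.
-/

open CategoryTheory CategoryTheory.Limits CategoryTheory.Pretriangulated

universe u v

theorem mukai_inequality
    (D : Type u) [Category.{v} D] [HasZeroObject D] [Preadditive D] [Linear ℂ D]
    [HasShift D ℤ] [∀ n : ℤ, (shiftFunctor D n).Additive] [Pretriangulated D]
    (finType : ∀ A B : D, FiniteDimensional ℂ (A ⟶ B))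
    (serre : ∀ (A B : D) (i : ℤ),
      Module.finrank ℂ (A ⟶ B⟦i⟧) = Module.finrank ℂ (B ⟶ A⟦(2 : ℤ) - i⟧))
    (A E B : D) (f : A ⟶ E) (g : E ⟶ B) (h : B ⟶ A⟦(1 : ℤ)⟧)
    (htri : Triangle.mk f g h ∈ distTriang D)
    (hAB : ∀ r : ℤ, r ≤ 0 → ∀ φ : A ⟶ B⟦r⟧, φ = 0)
    (hBB : ∀ s : ℤ, s < 0 → ∀ φ : B ⟶ B⟦s⟧, φ = 0) :
    Module.finrank ℂ (A ⟶ A⟦(1 : ℤ)⟧) + Module.finrank ℂ (B ⟶ B⟦(1 : ℤ)⟧)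
      ≤ Module.finrank ℂ (E ⟶ E⟦(1 : ℤ)⟧) := by
  haveI hfd1 : FiniteDimensional ℂ (E ⟶ E⟦(1 : ℤ)⟧) := finType _ _
  haveI hfd2 : FiniteDimensional ℂ (E ⟶ A⟦(1 : ℤ)⟧) := finType _ _
  haveI hfd3 : FiniteDimensional ℂ (E ⟶ B⟦(1 : ℤ)⟧) := finType _ _
  haveI hfd4 : FiniteDimensional ℂ (A ⟶ A⟦(1 : ℤ)⟧) := finType _ _
  haveI hfd5 : FiniteDimensional ℂ (B ⟶ B⟦(1 : ℤ)⟧) := finType _ _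
  haveI hfd6 : FiniteDimensional ℂ (B ⟶ A⟦(2 : ℤ)⟧) := finType _ _
  -- Z1 : every map A ⟶ B vanishes
  have Z1 : ∀ φ : A ⟶ B, φ = 0 := by
    intro φ
    have h0 : φ ≫ (shiftFunctorZero D ℤ).inv.app B = 0 := hAB 0 le_rfl _
    have := congrArg (fun ψ => ψ ≫ (shiftFunctorZero D ℤ).hom.app B) h0
    simpa using this
  -- Hom(A, B⟦0⟧) is a zero space
  haveI hsub0 : Subsingleton (A ⟶ B⟦(0 : ℤ)⟧) :=
    ⟨fun a b => by rw [hAB 0 le_rfl a, hAB 0 le_rfl b]⟩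
  -- By Serre duality, Hom(B, A⟦2⟧) is a zero space
  haveI hsub2 : Subsingleton (B ⟶ A⟦(2 : ℤ)⟧) := by
    have key := serre B A 2
    have e0 : ((2 : ℤ) - 2) = 0 := by norm_num
    rw [e0] at key
    have key2 : Module.finrank ℂ (B ⟶ A⟦(2 : ℤ)⟧) = 0 :=
      key.trans Module.finrank_zero_of_subsingleton
    exact Module.finrank_zero_iff.mp key2
  -- Z2 : every map B ⟶ A⟦1⟧⟦1⟧ vanishes
  have Z2 : ∀ φ : B ⟶ (A⟦(1 : ℤ)⟧)⟦(1 : ℤ)⟧, φ = 0 := by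
    intro φ
    have h1 : φ ≫ (shiftFunctorAdd' D 1 1 2 (by norm_num)).inv.app A = 0 :=
      Subsingleton.elim _ 0
    have := congrArg (fun ψ => ψ ≫ (shiftFunctorAdd' D 1 1 2 (by norm_num)).hom.app A) h1
    simpa using this
  -- Z3 : every map A⟦1⟧ ⟶ B⟦1⟧ vanishes
  have Z3 : ∀ φ : A⟦(1 : ℤ)⟧ ⟶ B⟦(1 : ℤ)⟧, φ = 0 := by
    intro φ
    obtain ⟨ψ, hψ⟩ := (shiftFunctor D (1 : ℤ)).map_surjective φ
    rw [← hψ, Z1 ψ, Functor.map_zero]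
  -- Z4 : every map B⟦-1⟧ ⟶ A⟦1⟧ vanishes
  have Z4 : ∀ φ : B⟦(-1 : ℤ)⟧ ⟶ A⟦(1 : ℤ)⟧, φ = 0 := by
    intro φ
    apply (shiftFunctor D (1 : ℤ)).map_injective
    rw [Functor.map_zero]
    have h0 : ((shiftFunctorCompIsoId D (-1 : ℤ) (1 : ℤ) (by norm_num)).app B).inv ≫
        (shiftFunctor D (1 : ℤ)).map φ = 0 := Z2 _
    calc (shiftFunctor D (1 : ℤ)).map φ
        = ((shiftFunctorCompIsoId D (-1 : ℤ) (1 : ℤ) (by norm_num)).app B).hom ≫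
          (((shiftFunctorCompIsoId D (-1 : ℤ) (1 : ℤ) (by norm_num)).app B).inv ≫
            (shiftFunctor D (1 : ℤ)).map φ) := by simp
      _ = 0 := by rw [h0, comp_zero]
  have hfg : f ≫ g = 0 := comp_distTriang_mor_zero₁₂ _ htri
  -- the linear maps
  set β : (E ⟶ E⟦(1 : ℤ)⟧) →ₗ[ℂ] (E ⟶ B⟦(1 : ℤ)⟧) :=
    Linear.rightComp ℂ E (g⟦(1 : ℤ)⟧') with hβ
  set u : (E ⟶ A⟦(1 : ℤ)⟧) →ₗ[ℂ] (E ⟶ E⟦(1 : ℤ)⟧) :=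
    Linear.rightComp ℂ E (f⟦(1 : ℤ)⟧') with hu
  set v : (E ⟶ A⟦(1 : ℤ)⟧) →ₗ[ℂ] (A ⟶ A⟦(1 : ℤ)⟧) :=
    Linear.leftComp ℂ (A⟦(1 : ℤ)⟧) f with hv
  set w : (B ⟶ B⟦(1 : ℤ)⟧) →ₗ[ℂ] (E ⟶ B⟦(1 : ℤ)⟧) :=
    Linear.leftComp ℂ (B⟦(1 : ℤ)⟧) g with hw
  -- range u ≤ ker β
  have hUkerβ : LinearMap.range u ≤ LinearMap.ker β := by
    rintro _ ⟨ψ, rfl⟩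
    simp only [LinearMap.mem_ker, hβ, hu, Linear.rightComp_apply, Category.assoc,
      ← Functor.map_comp, hfg, Functor.map_zero, comp_zero]
  -- ker u ≤ ker v
  have hkeruv : LinearMap.ker u ≤ LinearMap.ker v := by
    intro ψ hψ
    simp only [LinearMap.mem_ker, hu, Linear.rightComp_apply] at hψ
    obtain ⟨χ, hχ⟩ := Triangle.coyoneda_exact₁ _ htri ψ hψ
    simp only [LinearMap.mem_ker, hv, Linear.leftComp_apply]
    rw [hχ]
    change f ≫ χ ≫ h = 0
    refine (Category.assoc f χ h).symm.trans ?_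
    have : f ≫ χ = 0 := Z1 _
    exact (congrArg (· ≫ h) this).trans zero_comp
  -- v is surjective
  have hvsurj : Function.Surjective v := by
    intro ψ₀
    obtain ⟨χ, hχ⟩ := Triangle.yoneda_exact₂ _ (inv_rot_of_distTriang _ htri) ψ₀ (Z4 _)
    exact ⟨χ, hχ.symm⟩
  -- range w ≤ range β
  have hWrange : ∀ x : B ⟶ B⟦(1 : ℤ)⟧, w x ∈ LinearMap.range β := by
    intro x
    have hx : (g ≫ x) ≫ ((Triangle.mk f g h).rotate.rotate).mor₁⟦(1 : ℤ)⟧' = 0 := by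
      change (g ≫ x) ≫ h⟦(1 : ℤ)⟧' = 0
      rw [Category.assoc, Z2 (x ≫ h⟦(1 : ℤ)⟧'), comp_zero]
    obtain ⟨χ, hχ⟩ := Triangle.coyoneda_exact₁ _
      (rot_of_distTriang _ (rot_of_distTriang _ htri)) (g ≫ x) hx
    have hχ' : g ≫ x = χ ≫ (-(g⟦(1 : ℤ)⟧')) := hχ
    refine ⟨-χ, ?_⟩
    simp only [map_neg, hβ, hw, Linear.rightComp_apply, Linear.leftComp_apply]
    rw [hχ']
    show (-χ) ≫ g⟦(1 : ℤ)⟧' = χ ≫ (-(g⟦(1 : ℤ)⟧'))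
    exact (Preadditive.neg_comp ..).trans (Preadditive.comp_neg ..).symm
  -- w is injective
  have hWinj : Function.Injective w := by
    rw [← LinearMap.ker_eq_bot]
    apply LinearMap.ker_eq_bot'.mpr
    intro x hx
    simp only [hw, Linear.leftComp_apply] at hx
    obtain ⟨y, hy⟩ := Triangle.yoneda_exact₂ _ (rot_of_distTriang _ htri) x hx
    have : y = 0 := Z3 _
    rw [hy, this, comp_zero]
    rfl
  -- putting everything together
  have rn := LinearMap.finrank_range_add_finrank_ker β
  have h1 : Module.finrank ℂ (B ⟶ B⟦(1 : ℤ)⟧) ≤ Module.finrank ℂ (LinearMap.range β) := by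
    have hr : Module.finrank ℂ (LinearMap.range w) = Module.finrank ℂ (B ⟶ B⟦(1 : ℤ)⟧) :=
      LinearMap.finrank_range_of_inj hWinj
    rw [← hr]
    exact Submodule.finrank_mono (by rintro _ ⟨x, rfl⟩; exact hWrange x)
  have h2 : Module.finrank ℂ (A ⟶ A⟦(1 : ℤ)⟧) ≤ Module.finrank ℂ (LinearMap.ker β) := by
    have hvr : Module.finrank ℂ (LinearMap.range v) = Module.finrank ℂ (A ⟶ A⟦(1 : ℤ)⟧) := by
      rw [LinearMap.range_eq_top.mpr hvsurj]
      exact finrank_top ℂ _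
    have rnu := LinearMap.finrank_range_add_finrank_ker u
    have rnv := LinearMap.finrank_range_add_finrank_ker v
    have hk : Module.finrank ℂ (LinearMap.ker u) ≤ Module.finrank ℂ (LinearMap.ker v) :=
      Submodule.finrank_mono hkeruv
    have hru : Module.finrank ℂ (LinearMap.range u) ≤ Module.finrank ℂ (LinearMap.ker β) :=
      Submodule.finrank_mono hUkerβ
    omega
  omega
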